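/- Suppose q is a primitive cube root of unity (ℓ = 3). Then in O_q⁺(GL_2), the element z = a³ + 3abc + 3q·bcd is central, and det_q³ = z d³ − b³ c³, where det_q = ad − q² bc. -/

import Mathlib

noncomputable section

/-- Generators of the reflection equation algebra O_q⁺(GL₂). -/
inductive OGen : Type
  | a | b | c | d

/-- Generators inside the free algebra. -/
def Af : FreeAlgebra ℂ OGen := FreeAlgebra.ι ℂ OGen.a
def Bf : FreeAlgebra ℂ OGen := FreeAlgebra.ι ℂ OGen.b
def Cf : FreeAlgebra ℂ OGen := FreeAlgebra.ι ℂ OGen.c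
def Df : FreeAlgebra ℂ OGen := FreeAlgebra.ι ℂ OGen.d

/-- The defining relations of O_q⁺(GL₂). -/
inductive OqRel (q : ℂ) : FreeAlgebra ℂ OGen → FreeAlgebra ℂ OGen → Prop
  | da : OqRel q (Df * Af) (Af * Df)
  | db : OqRel q (Df * Bf) (q ^ 2 • (Bf * Df))
  | dc : OqRel q (Df * Cf) (q⁻¹ ^ 2 • (Cf * Df))
  | cb : OqRel q (Cf * Bf) (Bf * Cf + (1 - q⁻¹ ^ 2) • (Af * Df - Df * Df))
  | ba : OqRel q (Bf * Af) (Af * Bf + (1 - q⁻¹ ^ 2) • (Bf * Df))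
  | ca : OqRel q (Cf * Af) (Af * Cf + (q⁻¹ ^ 2 - 1) • (Df * Cf))

/-- The reflection equation algebra O_q⁺(GL₂), presented by generators and relations. -/
abbrev OqGL2 (q : ℂ) := RingQuot (OqRel q)

/-- The images of the generators a, b, c, d in O_q⁺(GL₂). -/
def ag (q : ℂ) : OqGL2 q := RingQuot.mkAlgHom ℂ (OqRel q) Af
def bg (q : ℂ) : OqGL2 q := RingQuot.mkAlgHom ℂ (OqRel q) Bf
def cg (q : ℂ) : OqGL2 q := RingQuot.mkAlgHom ℂ (OqRel q) Cf
def dg (q : ℂ) : OqGL2 q := RingQuot.mkAlgHom ℂ (OqRel q) Df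

set_option maxHeartbeats 4000000 in
/-- for q a primitive cube root of unity, z = a³ + 3abc + 3q·bcd
is central in O_q⁺(GL₂) and det_q³ = z d³ − b³c³, where det_q = ad − q²bc. -/
theorem stmt_16 (q : ℂ) (hq : IsPrimitiveRoot q 3) :
    (ag q ^ 3 + (3 : ℂ) • (ag q * bg q * cg q) + (3 * q) • (bg q * cg q * dg q)) ∈
      Subalgebra.center ℂ (OqGL2 q) ∧
    (ag q * dg q - q ^ 2 • (bg q * cg q)) ^ 3 =
      (ag q ^ 3 + (3 : ℂ) • (ag q * bg q * cg q) + (3 * q) • (bg q * cg q * dg q)) * dg q ^ 3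
        - bg q ^ 3 * cg q ^ 3 := by
  have hp3 : q ^ 3 = 1 := hq.pow_eq_one
  have hne1 : q ≠ 1 := hq.ne_one (by norm_num)
  have hq0 : q ≠ 0 := hq.ne_zero (by norm_num)
  have hsum : q ^ 2 + q + 1 = 0 := by
    have hmul : (q - 1) * (q ^ 2 + q + 1) = 0 := by linear_combination hp3
    rcases mul_eq_zero.mp hmul with h | h
    · exact absurd (sub_eq_zero.mp h) hne1
    · exact h
  have hp2 : q ^ 2 = -1 - q := by linear_combination hsum
  have hp4 : q ^ 4 = q := by linear_combination q * hp3
  have hp5 : q ^ 5 = -1 - q := by linear_combination q ^ 2 * hp3 + hp2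
  have hp6 : q ^ 6 = 1 := by linear_combination (q ^ 3 + 1) * hp3
  have hp7 : q ^ 7 = q := by linear_combination (q ^ 4 + q) * hp3
  have hp8 : q ^ 8 = -1 - q := by linear_combination (q ^ 5 + q ^ 2) * hp3 + hp2
  have hp9 : q ^ 9 = 1 := by linear_combination (q ^ 6 + q ^ 3 + 1) * hp3
  have hp10 : q ^ 10 = q := by linear_combination (q ^ 7 + q ^ 4 + q) * hp3
  have hp11 : q ^ 11 = -1 - q := by
    linear_combination (q ^ 8 + q ^ 5 + q ^ 2) * hp3 + hp2
  have hp12 : q ^ 12 = 1 := by linear_combination (q ^ 9 + q ^ 6 + q ^ 3 + 1) * hp3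
  have hp13 : q ^ 13 = q := by linear_combination (q^10 + q^7 + q^4 + q) * hp3
  have hp14 : q ^ 14 = -1 - q := by linear_combination (q^11 + q^8 + q^5 + q^2) * hp3 + hp2
  have hp15 : q ^ 15 = 1 := by linear_combination (q^12 + q^9 + q^6 + q^3 + 1) * hp3
  have hp16 : q ^ 16 = q := by linear_combination (q^13 + q^10 + q^7 + q^4 + q) * hp3
  have hp17 : q ^ 17 = -1 - q := by
    linear_combination (q^14 + q^11 + q^8 + q^5 + q^2) * hp3 + hp2
  have hp18 : q ^ 18 = 1 := by linear_combination (q^15 + q^12 + q^9 + q^6 + q^3 + 1) * hp3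
  have hqi : q⁻¹ = q ^ 2 := inv_eq_of_mul_eq_one_right (by linear_combination hp3)
  have hqi2 : q⁻¹ ^ 2 = q := by rw [hqi]; linear_combination q * hp3
  have eA : (RingQuot.mkAlgHom ℂ (OqRel q)) Af = ag q := rfl
  have eB : (RingQuot.mkAlgHom ℂ (OqRel q)) Bf = bg q := rfl
  have eC : (RingQuot.mkAlgHom ℂ (OqRel q)) Cf = cg q := rfl
  have eD : (RingQuot.mkAlgHom ℂ (OqRel q)) Df = dg q := rfl
  -- base relations in the quotient
  have rda : dg q * ag q = ag q * dg q := by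
    have h := RingQuot.mkAlgHom_rel ℂ (OqRel.da (q := q))
    simp only [map_mul, eA, eB, eC, eD] at h; exact h
  have rdb : dg q * bg q = q ^ 2 • (bg q * dg q) := by
    have h := RingQuot.mkAlgHom_rel ℂ (OqRel.db (q := q))
    simp only [map_mul, map_smul, eA, eB, eC, eD] at h; exact h
  have rdc : dg q * cg q = q • (cg q * dg q) := by
    have h := RingQuot.mkAlgHom_rel ℂ (OqRel.dc (q := q))
    simp only [map_mul, map_smul, eA, eB, eC, eD] at h
    rw [hqi2] at h; exact h
  have rba : bg q * ag q = ag q * bg q + (1 - q) • (bg q * dg q) := by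
    have h := RingQuot.mkAlgHom_rel ℂ (OqRel.ba (q := q))
    simp only [map_mul, map_add, map_smul, eA, eB, eC, eD] at h
    rw [hqi2] at h; exact h
  have rcb : cg q * bg q = bg q * cg q + (1 - q) • (ag q * dg q)
      - (1 - q) • (dg q * dg q) := by
    have h := RingQuot.mkAlgHom_rel ℂ (OqRel.cb (q := q))
    simp only [map_mul, map_add, map_sub, map_smul, eA, eB, eC, eD] at h
    rw [hqi2] at h
    rw [h, smul_sub, add_sub_assoc]
  have rca : cg q * ag q = ag q * cg q + (q ^ 2 - q) • (cg q * dg q) := by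
    have h := RingQuot.mkAlgHom_rel ℂ (OqRel.ca (q := q))
    simp only [map_mul, map_add, map_smul, eA, eB, eC, eD] at h
    rw [hqi2, rdc, smul_smul] at h
    rw [h, show (q - 1) * q = q ^ 2 - q by ring]
  -- interior variants
  have rda' : ∀ t, dg q * (ag q * t) = ag q * (dg q * t) := fun t => by
    rw [← mul_assoc, rda, mul_assoc]
  have rdb' : ∀ t, dg q * (bg q * t) = q ^ 2 • (bg q * (dg q * t)) := fun t => by
    rw [← mul_assoc, rdb, smul_mul_assoc, mul_assoc]
  have rdc' : ∀ t, dg q * (cg q * t) = q • (cg q * (dg q * t)) := fun t => by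
    rw [← mul_assoc, rdc, smul_mul_assoc, mul_assoc]
  have rba' : ∀ t, bg q * (ag q * t) =
      ag q * (bg q * t) + (1 - q) • (bg q * (dg q * t)) := fun t => by
    rw [← mul_assoc, rba, add_mul, smul_mul_assoc, mul_assoc, mul_assoc]
  have rca' : ∀ t, cg q * (ag q * t) =
      ag q * (cg q * t) + (q ^ 2 - q) • (cg q * (dg q * t)) := fun t => by
    rw [← mul_assoc, rca, add_mul, smul_mul_assoc, mul_assoc, mul_assoc]
  have rcb' : ∀ t, cg q * (bg q * t) = bg q * (cg q * t)
      + (1 - q) • (ag q * (dg q * t)) - (1 - q) • (dg q * (dg q * t)) := fun t => by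
    rw [← mul_assoc, rcb, sub_mul, add_mul, smul_mul_assoc, smul_mul_assoc,
      mul_assoc, mul_assoc, mul_assoc]
  have hpow3 : ∀ x : OqGL2 q, x ^ 3 = x * (x * x) := fun x => by
    rw [pow_succ, pow_succ, pow_one, mul_assoc]
  -- commutation with generators
  have czA : ag q * (ag q ^ 3 + (3 : ℂ) • (ag q * bg q * cg q)
        + (3 * q) • (bg q * cg q * dg q)) =
      (ag q ^ 3 + (3 : ℂ) • (ag q * bg q * cg q)
        + (3 * q) • (bg q * cg q * dg q)) * ag q := by
    simp only [hpow3, mul_assoc, mul_add, add_mul, mul_sub, sub_mul, smul_mul_assoc,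
      mul_smul_comm, smul_smul, smul_add, smul_sub,
      rda, rda', rdb, rdb', rdc, rdc', rba, rba', rca, rca', rcb, rcb']
    match_scalars <;>
      (try ring_nf <;> try simp only [hp2, hp3, hp4, hp5, hp6, hp7, hp8, hp9, hp10, hp11, hp12, hp13, hp14, hp15, hp16, hp17, hp18]
       <;> try ring_nf)
  have czB : bg q * (ag q ^ 3 + (3 : ℂ) • (ag q * bg q * cg q)
        + (3 * q) • (bg q * cg q * dg q)) =
      (ag q ^ 3 + (3 : ℂ) • (ag q * bg q * cg q)
        + (3 * q) • (bg q * cg q * dg q)) * bg q := by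
    simp only [hpow3, mul_assoc, mul_add, add_mul, mul_sub, sub_mul, smul_mul_assoc,
      mul_smul_comm, smul_smul, smul_add, smul_sub,
      rda, rda', rdb, rdb', rdc, rdc', rba, rba', rca, rca', rcb, rcb']
    match_scalars <;>
      (try ring_nf <;> try simp only [hp2, hp3, hp4, hp5, hp6, hp7, hp8, hp9, hp10, hp11, hp12, hp13, hp14, hp15, hp16, hp17, hp18]
       <;> try ring_nf)
  have czC : cg q * (ag q ^ 3 + (3 : ℂ) • (ag q * bg q * cg q)
        + (3 * q) • (bg q * cg q * dg q)) =
      (ag q ^ 3 + (3 : ℂ) • (ag q * bg q * cg q)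
        + (3 * q) • (bg q * cg q * dg q)) * cg q := by
    simp only [hpow3, mul_assoc, mul_add, add_mul, mul_sub, sub_mul, smul_mul_assoc,
      mul_smul_comm, smul_smul, smul_add, smul_sub,
      rda, rda', rdb, rdb', rdc, rdc', rba, rba', rca, rca', rcb, rcb']
    match_scalars <;>
      (try ring_nf <;> try simp only [hp2, hp3, hp4, hp5, hp6, hp7, hp8, hp9, hp10, hp11, hp12, hp13, hp14, hp15, hp16, hp17, hp18]
       <;> try ring_nf)
  have czD : dg q * (ag q ^ 3 + (3 : ℂ) • (ag q * bg q * cg q)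
        + (3 * q) • (bg q * cg q * dg q)) =
      (ag q ^ 3 + (3 : ℂ) • (ag q * bg q * cg q)
        + (3 * q) • (bg q * cg q * dg q)) * dg q := by
    simp only [hpow3, mul_assoc, mul_add, add_mul, mul_sub, sub_mul, smul_mul_assoc,
      mul_smul_comm, smul_smul, smul_add, smul_sub,
      rda, rda', rdb, rdb', rdc, rdc', rba, rba', rca, rca', rcb, rcb']
    match_scalars <;>
      (try ring_nf <;> try simp only [hp2, hp3, hp4, hp5, hp6, hp7, hp8, hp9, hp10, hp11, hp12, hp13, hp14, hp15, hp16, hp17, hp18]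
       <;> try ring_nf)
  constructor
  · rw [Subalgebra.mem_center_iff]
    set Z := (ag q ^ 3 + (3 : ℂ) • (ag q * bg q * cg q) + (3 * q) • (bg q * cg q * dg q))
      with hZ
    clear_value Z
    intro x
    obtain ⟨y, rfl⟩ := RingQuot.mkAlgHom_surjective ℂ (OqRel q) x
    induction y using FreeAlgebra.induction with
    | grade0 r =>
        rw [AlgHom.commutes]
        exact Algebra.commutes r _
    | grade1 g =>
        cases g with
        | a => exact czA
        | b => exact czB
        | c => exact czC
        | d => exact czD
    | mul u v hu hv =>
        rw [map_mul, mul_assoc, hv, ← mul_assoc, hu, mul_assoc]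
    | add u v hu hv =>
        rw [map_add, add_mul, mul_add, hu, hv]
  · simp only [hpow3, mul_assoc, mul_add, add_mul, mul_sub, sub_mul, smul_mul_assoc,
      mul_smul_comm, smul_smul, smul_add, smul_sub,
      rda, rda', rdb, rdb', rdc, rdc', rba, rba', rca, rca', rcb, rcb']
    match_scalars <;>
      (try ring_nf <;> try simp only [hp2, hp3, hp4, hp5, hp6, hp7, hp8, hp9, hp10, hp11, hp12, hp13, hp14, hp15, hp16, hp17, hp18]
       <;> try ring_nf)
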